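/- Let r ≥ 2 be an integer. For a tuple a = (a₁,…,a_r) of positive real numbers with ∏ᵢ₌₁^r aᵢ = 1, set F(a) := Σ_{i=1}^{r−1}(a_{i+1}−aᵢ)² + (a₁−a_r)² and G(a) := Σ_{i=1}^r aᵢ. For every 0 < ε < 1 there exists δ > 0, depending only on ε and r, such that whenever aᵢ < ε for some index i, one has F(a) > δ·G(a)². -/

import Mathlib

open Finset

/-- Telescoping plus Cauchy–Schwarz: a squared difference of values is controlled
by the sum of squared consecutive differences. -/
lemma toda_key (r : ℕ) (hr : 2 ≤ r) (a : ℕ → ℝ) {i j : ℕ}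
    (hi : 1 ≤ i) (hij : i ≤ j) (hj : j ≤ r) :
    (a j - a i) ^ 2 ≤ ((r : ℝ) - 1) * ∑ k ∈ Icc 1 (r - 1), (a (k + 1) - a k) ^ 2 := by
  have htel : a j - a i = ∑ m ∈ Ico i j, (a (m + 1) - a m) := by
    rw [Finset.sum_Ico_eq_sum_range]
    have h := Finset.sum_range_sub (fun k => a (i + k)) (j - i)
    simp only [Nat.add_sub_cancel' hij, Nat.add_zero] at h
    rw [← h]
    exact Finset.sum_congr rfl (fun k _ => by rw [← Nat.add_assoc])
  have hCS : (∑ m ∈ Ico i j, (a (m + 1) - a m)) ^ 2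
      ≤ (#(Ico i j) : ℝ) * ∑ m ∈ Ico i j, (a (m + 1) - a m) ^ 2 := by
    exact_mod_cast sq_sum_le_card_mul_sum_sq (s := Ico i j) (f := fun m => a (m + 1) - a m)
  have hcard : (#(Ico i j) : ℝ) ≤ (r : ℝ) - 1 := by
    rw [Nat.card_Ico]
    have : j - i ≤ r - 1 := by omega
    have hr1 : (1:ℝ) ≤ (r:ℝ) := by exact_mod_cast (by omega : 1 ≤ r)
    calc ((j - i : ℕ) : ℝ) ≤ ((r - 1 : ℕ) : ℝ) := by exact_mod_cast this
    _ = (r : ℝ) - 1 := by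
        have : ((r - 1 : ℕ) : ℝ) = (r : ℝ) - 1 := by
          have := Nat.cast_sub (by omega : 1 ≤ r) (R := ℝ)
          simpa using this
        exact this
  have hsub : Ico i j ⊆ Icc 1 (r - 1) := by
    intro m hm
    simp only [mem_Ico, mem_Icc] at hm ⊢
    omega
  have hsum : ∑ m ∈ Ico i j, (a (m + 1) - a m) ^ 2
      ≤ ∑ k ∈ Icc 1 (r - 1), (a (k + 1) - a k) ^ 2 :=
    Finset.sum_le_sum_of_subset_of_nonneg hsub (fun k _ _ => sq_nonneg _)
  have hnn : (0:ℝ) ≤ ∑ m ∈ Ico i j, (a (m + 1) - a m) ^ 2 :=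
    Finset.sum_nonneg fun _ _ => sq_nonneg _
  calc (a j - a i) ^ 2 = (∑ m ∈ Ico i j, (a (m + 1) - a m)) ^ 2 := by rw [htel]
    _ ≤ (#(Ico i j) : ℝ) * ∑ m ∈ Ico i j, (a (m + 1) - a m) ^ 2 := hCS
    _ ≤ ((r : ℝ) - 1) * ∑ k ∈ Icc 1 (r - 1), (a (k + 1) - a k) ^ 2 := by
        apply mul_le_mul hcard hsum hnn (by linarith [hr] ; )

/-- for tuples `a = (a₁,…,a_r)` of positive reals with product `1`,
setting `F(a) = Σ_{i=1}^{r−1}(a_{i+1}−aᵢ)² + (a₁−a_r)²` and `G(a) = Σᵢ aᵢ`, for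
every `0 < ε < 1` there is `δ > 0`, depending only on `ε` and `r`, such that if some
`aᵢ < ε` then `F(a) > δ·G(a)²`. -/
theorem toda_linear_algebra_gap_estimate
    (r : ℕ) (hr : 2 ≤ r) (ε : ℝ) (hε0 : 0 < ε) (hε1 : ε < 1) :
    ∃ δ : ℝ, 0 < δ ∧
      ∀ a : ℕ → ℝ, (∀ i, 1 ≤ i → i ≤ r → 0 < a i) →
        (∏ i ∈ Finset.Icc 1 r, a i = 1) →
        (∃ i, 1 ≤ i ∧ i ≤ r ∧ a i < ε) →
        δ * (∑ i ∈ Finset.Icc 1 r, a i) ^ 2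
          < (∑ i ∈ Finset.Icc 1 (r - 1), (a (i + 1) - a i) ^ 2) + (a 1 - a r) ^ 2 := by
  have hrR : (2:ℝ) ≤ (r:ℝ) := by exact_mod_cast hr
  have hr1 : (0:ℝ) < (r:ℝ) - 1 := by linarith
  have hrpos : (0:ℝ) < (r:ℝ) := by linarith
  refine ⟨(1 - ε) ^ 2 / (((r:ℝ) - 1) * (r:ℝ) ^ 2),
    div_pos (pow_pos (by linarith) 2) (mul_pos hr1 (pow_pos hrpos 2)), ?_⟩
  intro a hpos hprod ⟨i0, hi01, hi0r, hi0ε⟩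
  -- max element
  obtain ⟨j0, hj0mem, hj0max⟩ := Finset.exists_max_image (Icc 1 r) a
    ⟨1, by simp [mem_Icc]; omega⟩
  simp only [mem_Icc] at hj0mem
  set M := a j0 with hM
  have hi0mem : i0 ∈ Icc 1 r := by simp [mem_Icc]; omega
  have hMge : ∀ k ∈ Icc 1 r, a k ≤ M := fun k hk => hj0max k hk
  -- M ≥ 1
  have hM1 : 1 ≤ M := by
    by_contra h
    push_neg at h
    have hMpos : 0 < M := hpos j0 hj0mem.1 hj0mem.2
    have : ∏ i ∈ Icc 1 r, a i ≤ M ^ #(Icc 1 r) := by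
      rw [← Finset.prod_const]
      exact Finset.prod_le_prod (fun k hk => (hpos k (mem_Icc.mp hk).1 (mem_Icc.mp hk).2).le)
        (fun k hk => hMge k hk)
    rw [hprod, Nat.card_Icc] at this
    have hlt : M ^ (r + 1 - 1) < 1 := pow_lt_one₀ hMpos.le h (by omega)
    linarith
  set S := ∑ i ∈ Icc 1 r, a i with hS
  have hSpos : 0 < S := Finset.sum_pos (fun k hk => hpos k (mem_Icc.mp hk).1 (mem_Icc.mp hk).2)
    ⟨1, by simp [mem_Icc]; omega⟩
  have hSle : S ≤ (r:ℝ) * M := by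
    calc S ≤ ∑ _i ∈ Icc 1 r, M := Finset.sum_le_sum hMge
    _ = (#(Icc 1 r) : ℝ) * M := by rw [Finset.sum_const, nsmul_eq_mul]
    _ = (r:ℝ) * M := by rw [Nat.card_Icc]; norm_num
  have hSsq : S ^ 2 ≤ ((r:ℝ) * M) ^ 2 := by
    apply pow_le_pow_left₀ hSpos.le hSle
  set F := ∑ k ∈ Icc 1 (r - 1), (a (k + 1) - a k) ^ 2 with hF
  -- key: (M - a i0)^2 ≤ (r-1) * F
  have hkey : (M - a i0) ^ 2 ≤ ((r:ℝ) - 1) * F := by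
    rcases le_total i0 j0 with h | h
    · exact toda_key r hr a hi01 h hj0mem.2
    · have := toda_key r hr a hj0mem.1 h hi0r
      calc (M - a i0) ^ 2 = (a i0 - M) ^ 2 := by ring
      _ ≤ ((r:ℝ) - 1) * F := this
  have hεM : ε ≤ ε * M := le_mul_of_one_le_right hε0.le hM1
  have hMε : 0 ≤ M - ε := by linarith
  have hstrict : (M - ε) ^ 2 < (M - a i0) ^ 2 := by
    apply pow_lt_pow_left₀ _ hMε (by norm_num)
    linarith
  have h1 : (1 - ε) ^ 2 * M ^ 2 ≤ (M - ε) ^ 2 := by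
    have h2 : (1 - ε) * M ≤ M - ε := by nlinarith
    have h3 : 0 ≤ (1 - ε) * M := by nlinarith
    calc (1 - ε) ^ 2 * M ^ 2 = ((1 - ε) * M) ^ 2 := by ring
    _ ≤ (M - ε) ^ 2 := pow_le_pow_left₀ h3 h2 2
  have hFgt : (1 - ε) ^ 2 / (((r:ℝ) - 1) * (r:ℝ) ^ 2) * S ^ 2 < F := by
    rw [div_mul_eq_mul_div, div_lt_iff₀ (by positivity)]
    have hM2 : S ^ 2 ≤ (r:ℝ) ^ 2 * M ^ 2 := by nlinarith
    nlinarith [mul_le_mul_of_nonneg_left hM2 (sq_nonneg (1 - ε)),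
      mul_le_mul_of_nonneg_left h1 (sq_nonneg (r:ℝ)),
      mul_lt_mul_of_pos_left hstrict (pow_pos hrpos 2),
      mul_le_mul_of_nonneg_left hkey (sq_nonneg (r:ℝ))]
  have hcyc : 0 ≤ (a 1 - a r) ^ 2 := sq_nonneg _
  calc (1 - ε) ^ 2 / (((r:ℝ) - 1) * (r:ℝ) ^ 2) * S ^ 2 < F := hFgt
  _ ≤ F + (a 1 - a r) ^ 2 := by linarith
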